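/- Subsegment property of the total order construction in ℤ^2: let θ be a linear order on ℤ, let p ≤ q ≤ r coordinatewise in ℤ^2, and suppose q lies on the total-order-construction path R(p,r). Then the total-order-construction path R(p,q) is a prefix of R(p,r): the first (q_1 - p_1)+(q_2 - p_2) steps of R(p,r) coincide with R(p,q). -/

import Mathlib

open scoped Classical

/-- One step of the total order construction in `ℤ²` for the positive quadrant:
from the point `m`, step in the `x₁` direction if `m.1 + m.2` is among the
`q.1 - p.1` smallest elements (w.r.t. `r`) of the interval
`[p.1 + p.2, q.1 + q.2 - 1]`, and otherwise step in the `x₂` direction. -/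
noncomputable def step2 (r : ℤ → ℤ → Prop) (p q m : ℤ × ℤ) : ℤ × ℤ :=
  if ((Finset.Icc (p.1 + p.2) (q.1 + q.2 - 1)).filter
      (fun y => r y (m.1 + m.2))).card < (q.1 - p.1).toNat
  then (m.1 + 1, m.2) else (m.1, m.2 + 1)

/-- The point visited after `j` steps of the total order construction path
from `p` towards `q` generated by the order `r`. -/
noncomputable def path2 (r : ℤ → ℤ → Prop) (p q : ℤ × ℤ) : ℕ → ℤ × ℤ
  | 0 => p
  | j + 1 => step2 r p q (path2 r p q j)

/-- The step condition at abscissa-sum `t`. -/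
def cond2 (r : ℤ → ℤ → Prop) (p u : ℤ × ℤ) (t : ℤ) : Prop :=
  ((Finset.Icc (p.1 + p.2) (u.1 + u.2 - 1)).filter
      (fun y => r y t)).card < (u.1 - p.1).toNat

lemma path2_sum (r : ℤ → ℤ → Prop) (p u : ℤ × ℤ) :
    ∀ j : ℕ, (path2 r p u j).1 + (path2 r p u j).2 = p.1 + p.2 + j
  | 0 => by simp [path2]
  | j + 1 => by
    have ih := path2_sum r p u j
    unfold path2 step2
    split <;> simp <;> linarith

lemma path2_succ (r : ℤ → ℤ → Prop) (p u : ℤ × ℤ) (j : ℕ) :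
    path2 r p u (j + 1) =
      if cond2 r p u (p.1 + p.2 + j)
      then ((path2 r p u j).1 + 1, (path2 r p u j).2)
      else ((path2 r p u j).1, (path2 r p u j).2 + 1) := by
  have hs := path2_sum r p u j
  show step2 r p u (path2 r p u j) = _
  rw [step2, hs]
  exact if_congr Iff.rfl rfl rfl

lemma path2_fst (r : ℤ → ℤ → Prop) (p u : ℤ × ℤ) :
    ∀ j : ℕ, (path2 r p u j).1 =
      p.1 + (((Finset.range j).filter
        (fun i : ℕ => cond2 r p u (p.1 + p.2 + (i : ℤ)))).card : ℤ)
  | 0 => by simp [path2]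
  | j + 1 => by
    have ih := path2_fst r p u j
    rw [path2_succ, Finset.range_add_one, Finset.filter_insert]
    split_ifs with hc
    · rw [Finset.card_insert_of_notMem (by simp)]
      simp only [ih]
      push_cast
      ring
    · simp only [ih]

lemma key2 (r : ℤ → ℤ → Prop) (h : IsStrictTotalOrder ℤ r)
    {I J : Finset ℤ} (hJI : J ⊆ I) {K k : ℕ}
    (hcard : (J.filter (fun t => (I.filter (fun y => r y t)).card < K)).card = k)
    {t : ℤ} (ht : t ∈ J) :
    (I.filter (fun y => r y t)).card < K ↔ (J.filter (fun y => r y t)).card < k := by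
  have hmono : ∀ y t' : ℤ, y ∈ I → r y t' →
      (I.filter (fun z => r z y)).card < (I.filter (fun z => r z t')).card := by
    intro y t' hy hr
    apply Finset.card_lt_card
    constructor
    · intro z hz
      simp only [Finset.mem_filter] at hz ⊢
      exact ⟨hz.1, h.trans _ _ _ hz.2 hr⟩
    · intro hsub
      have h2 : y ∈ I.filter (fun z => r z y) := hsub (by simp [hy, hr])
      simp only [Finset.mem_filter] at h2
      exact h.irrefl y h2.2
  constructor
  · intro hB
    have hsub : J.filter (fun y => r y t) ⊆
        (J.filter (fun t' => (I.filter (fun y => r y t')).card < K)).erase t := by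
      intro y hy
      simp only [Finset.mem_filter] at hy
      refine Finset.mem_erase.mpr ⟨?_, Finset.mem_filter.mpr ⟨hy.1, ?_⟩⟩
      · rintro rfl; exact h.irrefl _ hy.2
      · exact lt_trans (hmono y t (hJI hy.1) hy.2) hB
    have ht' : t ∈ J.filter (fun t' => (I.filter (fun y => r y t')).card < K) :=
      Finset.mem_filter.mpr ⟨ht, hB⟩
    calc (J.filter (fun y => r y t)).card ≤ _ := Finset.card_le_card hsub
      _ < k := by rw [← hcard]; exact Finset.card_erase_lt_of_mem ht'
  · intro hs
    by_contra hB
    have hsub : (J.filter fun t' => (I.filter (fun y => r y t')).card < K) ⊆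
        J.filter (fun y => r y t) := by
      intro y hy
      simp only [Finset.mem_filter] at hy ⊢
      refine ⟨hy.1, ?_⟩
      rcases (haveI := h; trichotomous_of r y t) with hyt | rfl | hty
      · exact hyt
      · exact absurd hy.2 hB
      · exact absurd (lt_trans (hmono t y (hJI ht) hty) hy.2) hB
    have := Finset.card_le_card hsub
    omega

lemma count_shift (a : ℤ) (N : ℕ) (P : ℤ → Prop) [DecidablePred P] :
    ((Finset.Icc a (a + N - 1)).filter P).card =
      ((Finset.range N).filter (fun i : ℕ => P (a + (i : ℤ)))).card := by
  apply Finset.card_bij' (fun t _ => (t - a).toNat) (fun i _ => a + (i : ℤ))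
  · intro t ht
    simp only [Finset.mem_filter, Finset.mem_Icc] at ht
    simp only [Finset.mem_filter, Finset.mem_range]
    constructor
    · omega
    · rw [show a + ((t - a).toNat : ℤ) = t by omega]; exact ht.2
  · intro i hi
    simp only [Finset.mem_filter, Finset.mem_range] at hi
    simp only [Finset.mem_filter, Finset.mem_Icc]
    exact ⟨⟨by omega, by omega⟩, hi.2⟩
  · intro t ht
    simp only [Finset.mem_filter, Finset.mem_Icc] at ht
    omega
  · intro i hi
    simp

theorem stmt_14 (r : ℤ → ℤ → Prop) (h : IsStrictTotalOrder ℤ r)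
    (p q s : ℤ × ℤ) (hpq1 : p.1 ≤ q.1) (hpq2 : p.2 ≤ q.2)
    (hqs1 : q.1 ≤ s.1) (hqs2 : q.2 ≤ s.2)
    (hon : ∃ j ≤ ((s.1 - p.1) + (s.2 - p.2)).toNat, path2 r p s j = q) :
    ∀ j ≤ ((q.1 - p.1) + (q.2 - p.2)).toNat, path2 r p s j = path2 r p q j := by
  obtain ⟨j0, hj0le, hj0⟩ := hon
  set N := ((q.1 - p.1) + (q.2 - p.2)).toNat with hNdef
  have hN : (N : ℤ) = (q.1 - p.1) + (q.2 - p.2) := Int.toNat_of_nonneg (by omega)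
  have hsum := path2_sum r p s j0
  rw [hj0] at hsum
  have hj0N : j0 = N := by omega
  subst hj0N
  -- the count of x₁-steps on [a, a+N-1] along R(p,s) equals q.1 - p.1
  have hfst := path2_fst r p s N
  rw [hj0] at hfst
  have hcount : ((Finset.range N).filter
      (fun i : ℕ => cond2 r p s (p.1 + p.2 + (i : ℤ)))).card
      = (q.1 - p.1).toNat := by omega
  have hIcc : ((Finset.Icc (p.1 + p.2) (q.1 + q.2 - 1)).filter
      (fun t => ((Finset.Icc (p.1 + p.2) (s.1 + s.2 - 1)).filter (fun y => r y t)).card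
        < (s.1 - p.1).toNat)).card = (q.1 - p.1).toNat := by
    have hb : q.1 + q.2 - 1 = p.1 + p.2 + (N : ℤ) - 1 := by omega
    rw [hb, count_shift (p.1 + p.2) N]
    simpa [cond2] using hcount
  have hequiv : ∀ t ∈ Finset.Icc (p.1 + p.2) (q.1 + q.2 - 1),
      (cond2 r p s t ↔ cond2 r p q t) := by
    intro t ht
    have := key2 r h (Finset.Icc_subset_Icc_right (by omega : q.1 + q.2 - 1 ≤ s.1 + s.2 - 1))
      hIcc ht
    simpa [cond2] using this
  intro j
  induction j with
  | zero => intro _; rfl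
  | succ n ih =>
    intro hj
    have ihn := ih (by omega)
    rw [path2_succ, path2_succ, ihn]
    have hmem : p.1 + p.2 + (n : ℤ) ∈ Finset.Icc (p.1 + p.2) (q.1 + q.2 - 1) := by
      simp only [Finset.mem_Icc]
      omega
    rw [if_congr (hequiv _ hmem) rfl rfl]
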